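/- (Proposition 1(ii), case |Q| = |R| = 2.) Suppose Assumption 1 holds, i.e. P₁ > min(P₂·a₁, P₂·a₂) and P₂ > min(P₁·a₁, P₁·a₂). Then the 2×2 hospital game has a Nash equilibrium in which the two players choose different strategies: either the profile where q₁ plays r₁ and q₂ plays r₂, or the profile where q₁ plays r₂ and q₂ plays r₁, is a Nash equilibrium. -/
import Mathlib


/-- The two wards a hospital can choose to make excel. -/
inductive Ward : Type
  | r1 | r2
deriving DecidableEq

open Ward

/-- The size of the patient group associated with a ward. -/
def grp (P1 P2 : ℝ) : Ward → ℝ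
  | r1 => P1
  | r2 => P2

/-- Payoff of hospital q₁ when q₁ chooses `s1` and q₂ chooses `s2`:
if both choose the same ward, q₁ gets the fraction `a1` of that ward's group;
otherwise q₁ gets the full group of its chosen ward. -/
def pay1 (P1 P2 a1 : ℝ) (s1 s2 : Ward) : ℝ :=
  if s1 = s2 then grp P1 P2 s1 * a1 else grp P1 P2 s1

/-- Payoff of hospital q₂ when q₁ chooses `s1` and q₂ chooses `s2`:
if both choose the same ward, q₂ gets the fraction `a2` of that ward's group;
otherwise q₂ gets the full group of its chosen ward. -/
def pay2 (P1 P2 a2 : ℝ) (s1 s2 : Ward) : ℝ :=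
  if s1 = s2 then grp P1 P2 s2 * a2 else grp P1 P2 s2

/-- A strategy profile `(s1, s2)` is a Nash equilibrium if neither hospital can
strictly increase its payoff by unilaterally changing its strategy. -/
def IsNash (P1 P2 a1 a2 : ℝ) (s1 s2 : Ward) : Prop :=
  (∀ t1 : Ward, pay1 P1 P2 a1 t1 s2 ≤ pay1 P1 P2 a1 s1 s2) ∧
  (∀ t2 : Ward, pay2 P1 P2 a2 s1 t2 ≤ pay2 P1 P2 a2 s1 s2)

/-- Proposition 1(ii), case |Q| = |R| = 2: under Assumption 1, the game has a
Nash equilibrium in which the two hospitals choose different strategies. -/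
theorem stmt4 (P1 P2 a1 a2 : ℝ)
    (hP1 : 0 < P1) (hP2 : 0 < P2) (ha1 : 0 < a1) (ha2 : 0 < a2)
    (hsum : a1 + a2 = 1)
    (hA1 : P1 > min (P2 * a1) (P2 * a2))
    (hA2 : P2 > min (P1 * a1) (P1 * a2)) :
    IsNash P1 P2 a1 a2 r1 r2 ∨ IsNash P1 P2 a1 a2 r2 r1 := by
  have ha1' : a1 < 1 := by linarith
  have ha2' : a2 < 1 := by linarith
  by_cases h1 : P2 * a1 ≤ P1
  · by_cases h2 : P1 * a2 ≤ P2
    · left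
      constructor
      · intro t1; cases t1 <;> simp [pay1, grp] <;> linarith
      · intro t2; cases t2 <;> simp [pay2, grp] <;> linarith
    · -- P2 < P1 * a2, so min(P1a1,P1a2) = P1a1, hence P2 > P1*a1
      right
      push_neg at h2
      have hm : P1 * a1 < P1 * a2 := by
        by_contra h; push_neg at h
        rw [min_eq_right h] at hA2; linarith
      have h3 : P1 * a1 < P2 := by
        have := min_eq_left hm.le
        rw [this] at hA2; exact hA2
      have h4 : P2 * a2 < P1 := by nlinarith
      constructor
      · intro t1; cases t1 <;> simp [pay1, grp] <;> linarith
      · intro t2; cases t2 <;> simp [pay2, grp] <;> linarith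
  · right
    push_neg at h1
    have h3 : P1 * a1 < P2 := by nlinarith
    have h4 : P2 * a2 < P1 := by
      rcases min_cases (P2*a1) (P2*a2) with ⟨he, _⟩ | ⟨he, _⟩ <;> rw [he] at hA1 <;> nlinarith
    constructor
    · intro t1; cases t1 <;> simp [pay1, grp] <;> linarith
    · intro t2; cases t2 <;> simp [pay2, grp] <;> linarith
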